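/- Each Krammer representation map σ_i is an invertible Λ-linear endomorphism of the free Λ-module V, so the Krammer representation defines a group homomorphism from the braid group B_n to GL(V). -/

import Mathlib

open LaurentPolynomial in
/-- The ring `Λ = ℤ[q^{±1}, t^{±1}]` of Laurent polynomials in two variables. -/
abbrev Lam : Type := LaurentPolynomial (LaurentPolynomial ℤ)

/-- The variable `q` of `Λ`. -/
noncomputable def lamq : Lam := LaurentPolynomial.C (LaurentPolynomial.T 1)

/-- The variable `t` of `Λ`. -/
noncomputable def lamt : Lam := LaurentPolynomial.T 1

/-- The index set `{(j,k) : 1 ≤ j < k ≤ n}` for the basis of the Krammer representation. -/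
abbrev KIdx (n : ℕ) := {p : ℕ × ℕ // 1 ≤ p.1 ∧ p.1 < p.2 ∧ p.2 ≤ n}

/-- The free `Λ`-module `V` with basis `F_{j,k}` for `1 ≤ j < k ≤ n`. -/
abbrev KV (n : ℕ) := KIdx n →₀ Lam

/-- The basis vector `F_{j,k}`. -/
noncomputable def KF (n : ℕ) (j k : ℕ) (h : 1 ≤ j ∧ j < k ∧ k ≤ n) : KV n :=
  Finsupp.single ⟨(j, k), h⟩ 1

/-- The image of the basis vector `F_{j,k}` under Krammer's map `σ_i`. -/
noncomputable def kimg (n : ℕ) (i : ℕ) : KIdx n → KV n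
  | ⟨(j, k), hp⟩ =>
    if h1 : i + 1 = j ∧ 1 ≤ i then
      lamq • KF n i k ⟨h1.2, by omega, by omega⟩
        + (lamq ^ 2 - lamq) • KF n i j ⟨h1.2, by omega, by omega⟩
        + (1 - lamq) • KF n j k hp
    else if h2 : i = j ∧ i + 1 = k then
      (-(lamt * lamq ^ 2)) • KF n j k hp
    else if h3 : i = j then
      KF n (j + 1) k ⟨by omega, by omega, by omega⟩
    else if h4 : i + 1 = k then
      lamq • KF n j i ⟨by omega, by omega, by omega⟩
        + (1 - lamq) • KF n j k hp
        + ((1 - lamq) * (lamq * lamt)) • KF n i k ⟨by omega, by omega, by omega⟩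
    else if h5 : i = k ∧ k + 1 ≤ n then
      KF n j (k + 1) ⟨by omega, by omega, by omega⟩
    else
      KF n j k hp

/-- Krammer's linear map `σ_i` on `V` (for `1 ≤ i ≤ n-1`). -/
noncomputable def krammerσ (n : ℕ) (i : ℕ) : KV n →ₗ[Lam] KV n :=
  Finsupp.lift (KV n) Lam (KIdx n) (kimg n i)

/-- The braid relations on `m` generators. -/
def braidRels (m : ℕ) : Set (FreeGroup (Fin m)) :=
  { r | (∃ i j : Fin m, (i : ℕ) + 1 < (j : ℕ) ∧
          r = FreeGroup.of i * FreeGroup.of j * (FreeGroup.of i)⁻¹ * (FreeGroup.of j)⁻¹) ∨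
        (∃ i j : Fin m, (i : ℕ) + 1 = (j : ℕ) ∧
          r = FreeGroup.of i * FreeGroup.of j * FreeGroup.of i *
              (FreeGroup.of j * FreeGroup.of i * FreeGroup.of j)⁻¹) }

/-- The braid group `B_n`, presented with the Artin generators `σ_1, …, σ_{n-1}`. -/
abbrev BraidGroup (n : ℕ) := PresentedGroup (braidRels (n - 1))

/-- The Artin generator `σ_{i+1}` of `B_n` (for `i : Fin (n-1)`). -/
def braidGen (n : ℕ) (i : Fin (n - 1)) : BraidGroup n := PresentedGroup.of i

-- auxiliary
set_option synthInstance.maxHeartbeats 1000000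
set_option maxHeartbeats 4000000
noncomputable def lamqInv : Lam := LaurentPolynomial.C (LaurentPolynomial.T (-1))
noncomputable def lamtInv : Lam := LaurentPolynomial.T (-1)

lemma lamq_mul_inv : lamq * lamqInv = 1 := by
  rw [lamq, lamqInv, ← map_mul, ← LaurentPolynomial.T_add]
  norm_num [LaurentPolynomial.T_zero]

lemma lamt_mul_inv : lamt * lamtInv = 1 := by
  rw [lamt, lamtInv, ← LaurentPolynomial.T_add]
  norm_num [LaurentPolynomial.T_zero]

lemma sKF (n i j k : ℕ) (hp : 1 ≤ j ∧ j < k ∧ k ≤ n) :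
    krammerσ n i (KF n j k hp) = kimg n i ⟨(j, k), hp⟩ := by
  simp [krammerσ, KF, Finsupp.lift_apply, Finsupp.sum_single_index]

lemma end_ext {n : ℕ} {f g : Module.End Lam (KV n)}
    (h : ∀ j k hp, f (KF n j k hp) = g (KF n j k hp)) : f = g := by
  apply Finsupp.lhom_ext
  rintro ⟨⟨j, k⟩, hp⟩ b
  have : (Finsupp.single (⟨(j,k),hp⟩ : KIdx n) b : KV n) = b • KF n j k hp := by
    simp [KF, Finsupp.smul_single]
  rw [this, map_smul, map_smul, h]

lemma cubic (n i : ℕ) (h1 : 1 ≤ i) (h2 : i < n) :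
    krammerσ n i * (krammerσ n i * krammerσ n i
      + (lamq + lamt * lamq ^ 2 - 1) • krammerσ n i
      + (lamt * lamq ^ 3 - lamq - lamt * lamq ^ 2) • (1 : Module.End Lam (KV n)))
    = (lamt * lamq ^ 3) • 1 := by
  apply end_ext; intro j k hp
  simp only [Module.End.mul_apply, LinearMap.add_apply, LinearMap.smul_apply,
    Module.End.one_apply, map_add, map_smul, sKF]
  simp only [kimg, true_and, and_true]
  split_ifs <;> try omega
  all_goals simp only [map_add, map_smul, sKF, kimg, true_and, and_true]
  all_goals try (split_ifs <;> try omega)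
  all_goals simp only [map_add, map_smul, sKF, kimg, true_and, and_true]
  all_goals try (split_ifs <;> try omega)
  all_goals (casesm* _ ∧ _)
  all_goals subst_vars
  all_goals try omega
  all_goals module

lemma comm_rel (n a b : ℕ) (h1 : 1 ≤ a) (h2 : a + 1 < b) (h3 : b < n) :
    krammerσ n a * krammerσ n b = krammerσ n b * krammerσ n a := by
  apply end_ext; intro j k hp
  simp only [Module.End.mul_apply, sKF]
  simp only [kimg, true_and, and_true]
  split_ifs <;> try omega
  all_goals simp only [map_add, map_smul, sKF, kimg, true_and, and_true]
  all_goals try (split_ifs <;> try omega)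
  all_goals (casesm* _ ∧ _)
  all_goals subst_vars
  all_goals module

lemma braid_rel (n a : ℕ) (h1 : 1 ≤ a) (h2 : a + 1 < n) :
    krammerσ n a * krammerσ n (a+1) * krammerσ n a
      = krammerσ n (a+1) * krammerσ n a * krammerσ n (a+1) := by
  apply end_ext; intro j k hp
  simp only [Module.End.mul_apply, sKF]
  simp only [kimg, true_and, and_true]
  split_ifs <;> try omega
  all_goals simp only [map_add, map_smul, sKF, kimg, true_and, and_true]
  all_goals try (split_ifs <;> try omega)
  all_goals simp only [map_add, map_smul, sKF, kimg, true_and, and_true]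
  all_goals try (split_ifs <;> try omega)
  all_goals (casesm* _ ∧ _)
  all_goals subst_vars
  all_goals module

noncomputable def kinv (n i : ℕ) : Module.End Lam (KV n) :=
  (lamtInv * lamqInv ^ 3) • (krammerσ n i * krammerσ n i
      + (lamq + lamt * lamq ^ 2 - 1) • krammerσ n i
      + (lamt * lamq ^ 3 - lamq - lamt * lamq ^ 2) • 1)

lemma scalar_inv : (lamtInv * lamqInv ^ 3) * (lamt * lamq ^ 3) = 1 := by
  linear_combination (((lamq * lamqInv) ^ 2 + lamq * lamqInv + 1) * lamt * lamtInv) * lamq_mul_inv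
    + lamt_mul_inv

lemma mul_kinv (n i : ℕ) (h1 : 1 ≤ i) (h2 : i < n) :
    krammerσ n i * kinv n i = 1 := by
  rw [kinv, mul_smul_comm, cubic n i h1 h2]
  exact (smul_smul (lamtInv * lamqInv ^ 3) (lamt * lamq ^ 3) (1 : Module.End Lam (KV n))).trans
    (by rw [scalar_inv, one_smul])

lemma commute_kinv (n i : ℕ) : Commute (krammerσ n i) (kinv n i) := by
  unfold kinv
  exact (((Commute.refl _).mul_right (Commute.refl _)).add_right
    ((Commute.refl _).smul_right _)).add_right ((Commute.one_right _).smul_right _) |>.smul_right _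

lemma kinv_mul (n i : ℕ) (h1 : 1 ≤ i) (h2 : i < n) :
    kinv n i * krammerσ n i = 1 := by
  rw [← commute_kinv n i, mul_kinv n i h1 h2]

noncomputable def kunit (n i : ℕ) (h1 : 1 ≤ i) (h2 : i < n) : (Module.End Lam (KV n))ˣ :=
  ⟨krammerσ n i, kinv n i, mul_kinv n i h1 h2, kinv_mul n i h1 h2⟩


theorem krammer_representation (n : ℕ) :
    (∀ i : ℕ, 1 ≤ i → i < n → IsUnit (krammerσ n i : Module.End Lam (KV n))) ∧
    ∃ f : BraidGroup n →* (Module.End Lam (KV n))ˣ,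
      ∀ idx : Fin (n - 1),
        ((f (braidGen n idx) : (Module.End Lam (KV n))ˣ) : Module.End Lam (KV n)) =
          krammerσ n ((idx : ℕ) + 1) := by
  constructor
  · exact fun i hi hin => ⟨kunit n i hi hin, rfl⟩
  · set g : Fin (n - 1) → (Module.End Lam (KV n))ˣ :=
      fun idx => kunit n ((idx : ℕ) + 1) (by omega) (by have := idx.isLt; omega) with hg
    have hrels : ∀ r ∈ braidRels (n - 1), FreeGroup.lift g r = 1 := by
      rintro r (⟨i, j, hij, rfl⟩ | ⟨i, j, hij, rfl⟩)
      · have hc : g i * g j = g j * g i := by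
          apply Units.ext
          exact comm_rel n ((i:ℕ)+1) ((j:ℕ)+1) (by omega) (by omega)
            (by have := j.isLt; omega)
        simp only [map_mul, map_inv, FreeGroup.lift_apply_of]
        rw [hc]; group
      · have hb : g i * g j * g i = g j * g i * g j := by
          apply Units.ext
          show krammerσ n ((i:ℕ)+1) * krammerσ n ((j:ℕ)+1) * krammerσ n ((i:ℕ)+1)
            = krammerσ n ((j:ℕ)+1) * krammerσ n ((i:ℕ)+1) * krammerσ n ((j:ℕ)+1)
          rw [show ((j:ℕ)+1) = ((i:ℕ)+1)+1 from by omega]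
          exact braid_rel n ((i:ℕ)+1) (by omega) (by have := j.isLt; omega)
        simp only [map_mul, map_inv, FreeGroup.lift_apply_of]
        rw [hb]; group
    refine ⟨PresentedGroup.toGroup hrels, fun idx => ?_⟩
    rw [braidGen, PresentedGroup.toGroup.of]
    rfl
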